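/- Let a,b ∈ ℂ∖{0} and z ∈ ℂ with Re(z) > 0 and exp(Re z) > sqrt(|2b/a|). Set w = a·e^z + b·e^{-z}. Then z ∈ Log(w/a) − Log(1 + (b/a)·e^{−2z}) + 2πi·ℤ, and |Log(1 + (b/a)·e^{−2z})| < 2·ln 2 · |(b/a)·e^{−2z}| < 1. -/

import Mathlib

lemma aux_hasSum_real {t : ℝ} (ht0 : 0 ≤ t) (ht : t < 1) :
    HasSum (fun n : ℕ ↦ t ^ n / n) (-Real.log (1 - t)) := by
  have h := Complex.hasSum_taylorSeries_neg_log (z := (t : ℂ))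
    (by simpa [_root_.abs_of_nonneg ht0])
  have h2 : HasSum (fun n : ℕ ↦ ((t ^ n / n : ℝ) : ℂ)) ((-Real.log (1 - t) : ℝ) : ℂ) := by
    convert h using 2 with n
    · push_cast; ring
    · push_cast
      rw [Complex.ofReal_log (by linarith)]
      push_cast; ring
  exact Complex.hasSum_ofReal.mp h2

lemma aux_norm_log_le {z : ℂ} (hz : ‖z‖ < 1) :
    ‖Complex.log (1 + z)‖ ≤ -Real.log (1 - ‖z‖) := by
  have h := Complex.hasSum_taylorSeries_log hz
  have hr := aux_hasSum_real (norm_nonneg z) hz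
  have hnorm : ∀ n : ℕ, ‖(-1 : ℂ) ^ (n + 1) * z ^ n / n‖ = ‖z‖ ^ n / n := by
    intro n
    simp [norm_div, norm_mul, norm_pow]
  calc ‖Complex.log (1 + z)‖ = ‖∑' n : ℕ, (-1 : ℂ) ^ (n + 1) * z ^ n / n‖ := by
        rw [h.tsum_eq]
    _ ≤ ∑' n : ℕ, ‖(-1 : ℂ) ^ (n + 1) * z ^ n / n‖ := by
        apply norm_tsum_le_tsum_norm
        exact (hr.summable.congr fun n => (hnorm n).symm)
    _ = ∑' n : ℕ, ‖z‖ ^ n / n := tsum_congr hnorm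
    _ = -Real.log (1 - ‖z‖) := hr.tsum_eq

lemma aux_strict {t : ℝ} (ht0 : 0 < t) (ht : t < 1/2) :
    -Real.log (1 - t) < 2 * Real.log 2 * t := by
  have h := strictConcaveOn_log_Ioi.2 (Set.mem_Ioi.mpr one_pos)
    (Set.mem_Ioi.mpr (by norm_num : (0:ℝ) < 1/2)) (by norm_num)
    (by linarith : (0:ℝ) < 1 - 2*t) (by linarith : (0:ℝ) < 2*t) (by ring)
  simp only [smul_eq_mul, Real.log_one, mul_zero, zero_add] at h
  have h12 : Real.log (1/2) = -Real.log 2 := by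
    rw [Real.log_div one_ne_zero two_ne_zero, Real.log_one]; ring
  rw [h12] at h
  have heq : (1 - 2*t) * 1 + 2*t * (1/2) = 1 - t := by ring
  rw [heq] at h
  linarith

theorem inverse_branch_control (a b z : ℂ) (ha : a ≠ 0) (hb : b ≠ 0)
    (hre : 0 < z.re)
    (hgrow : Real.sqrt (2 * ‖b‖ / ‖a‖) < Real.exp z.re) :
    (∃ n : ℤ, z = Complex.log ((a * Complex.exp z + b * Complex.exp (-z)) / a)
        - Complex.log (1 + b / a * Complex.exp (-2 * z)) + 2 * Real.pi * Complex.I * n) ∧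
    ‖Complex.log (1 + b / a * Complex.exp (-2 * z))‖ <
      2 * Real.log 2 * ‖b / a * Complex.exp (-2 * z)‖ ∧
    2 * Real.log 2 * ‖b / a * Complex.exp (-2 * z)‖ < 1 := by
  set u : ℂ := b / a * Complex.exp (-2 * z) with hu_def
  have hane : ‖a‖ ≠ 0 := by simpa using ha
  have hu0 : u ≠ 0 := by
    apply mul_ne_zero (div_ne_zero hb ha) (Complex.exp_ne_zero _)
  have hupos : 0 < ‖u‖ := by simpa using hu0
  have habs : ‖u‖ = ‖b‖ / ‖a‖ * Real.exp (-(2 * z.re)) := by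
    rw [hu_def, norm_mul, norm_div, Complex.norm_exp]
    norm_num
  have hsq : 2 * (‖b‖ / ‖a‖) < Real.exp z.re ^ 2 := by
    have h0 : 0 ≤ 2 * ‖b‖ / ‖a‖ := by positivity
    calc 2 * (‖b‖ / ‖a‖)
        = Real.sqrt (2 * ‖b‖ / ‖a‖) ^ 2 := by
          rw [Real.sq_sqrt h0]; ring
      _ < Real.exp z.re ^ 2 := by
          apply pow_lt_pow_left₀ hgrow (Real.sqrt_nonneg _)
          norm_num
  have hE : 0 < Real.exp z.re ^ 2 := by positivity
  have hu_lt : ‖u‖ < 1/2 := by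
    rw [habs]
    have h2 : Real.exp (-(2 * z.re)) = (Real.exp z.re ^ 2)⁻¹ := by
      rw [pow_two, ← Real.exp_add, ← Real.exp_neg]
      congr 1
      ring
    rw [h2, ← div_eq_mul_inv, div_lt_iff₀ hE]
    linarith
  have hu1 : ‖u‖ < 1 := by linarith
  have h1u : (1 : ℂ) + u ≠ 0 := by
    intro h
    have hu' : u = -1 := by linear_combination h
    rw [hu'] at hu1
    simp at hu1
  -- second and third parts
  have part2 : ‖Complex.log (1 + u)‖ < 2 * Real.log 2 * ‖u‖ := by
    calc ‖Complex.log (1 + u)‖ ≤ -Real.log (1 - ‖u‖) :=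
          aux_norm_log_le (by simpa using hu1)
      _ < 2 * Real.log 2 * ‖u‖ := aux_strict hupos hu_lt
  have part3 : 2 * Real.log 2 * ‖u‖ < 1 := by
    have hlog2 : Real.log 2 < 0.6931471808 := Real.log_two_lt_d9
    have hlog2' : 0 < Real.log 2 := Real.log_pos (by norm_num)
    nlinarith [hu_lt, hupos]
  refine ⟨?_, part2, part3⟩
  -- first part
  have key : Complex.exp z * Complex.exp (-2 * z) = Complex.exp (-z) := by
    rw [← Complex.exp_add]; congr 1; ring
  have hfac : a * Complex.exp z + b * Complex.exp (-z) = a * Complex.exp z * (1 + u) := by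
    have h3 : a * Complex.exp z * (b / a * Complex.exp (-2 * z)) = b * Complex.exp (-z) := by
      rw [← key]; field_simp
    rw [hu_def, mul_add, mul_one, h3]
  have hwa : (a * Complex.exp z + b * Complex.exp (-z)) / a = Complex.exp z * (1 + u) := by
    rw [hfac]; field_simp
  have hwane : (a * Complex.exp z + b * Complex.exp (-z)) / a ≠ 0 := by
    rw [hwa]
    exact mul_ne_zero (Complex.exp_ne_zero _) h1u
  have hexp : Complex.exp z =
      Complex.exp (Complex.log ((a * Complex.exp z + b * Complex.exp (-z)) / a)
        - Complex.log (1 + u)) := by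
    rw [Complex.exp_sub, Complex.exp_log hwane, Complex.exp_log h1u, hwa]
    field_simp
  obtain ⟨n, hn⟩ := Complex.exp_eq_exp_iff_exists_int.mp hexp.symm
  refine ⟨-n, ?_⟩
  rw [hn]
  push_cast
  ring
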